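/- Suppose the source condition holds: x† is the (x0, C0)-minimum-norm solution of L x = y, and there exist μ ∈ (0, 1/2], ρ > 0 and v ∈ X with ‖v‖ ≤ ρ and x† − x0 = C0^{1/2} (B*B)^μ v, where B := R^{-1/2} L C0^{1/2}. Let x_α := x0 + C0^{1/2}(B*B + α Id)^{-1} B* R^{-1/2}(y − L x0). Then there exists a constant c2, independent of α, δ and ρ, such that ‖y − L x_α‖_R ≤ c2 · ρ · α^{μ + 1/2} for all α > 0. -/

import Mathlib

open MeasureTheory
open scoped InnerProductSpace ENNReal NNReal

section Defs

variable {E X Y : Type*}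
  [NormedAddCommGroup E] [InnerProductSpace ℝ E] [CompleteSpace E]
  [NormedAddCommGroup X] [InnerProductSpace ℝ X] [CompleteSpace X]
  [NormedAddCommGroup Y] [InnerProductSpace ℝ Y] [CompleteSpace Y]

/-- The direct EKI estimate `X^d_α(A) = x₀ + A (B*B + α I)⁻¹ B* z`, where `B := R^{-1/2} L A`
(passed via the bounded factorization `RinvL = R^{-1/2} L`) and `z = R^{-1/2}(ŷ - L x₀)`.
Note that `A* L* R^{-1} = B* R^{-1/2}`, so this coincides with
`x₀ + A (A* L* R^{-1} L A + α I)⁻¹ A* L* R^{-1} (ŷ - L x₀)`.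
For `A = C0^{1/2}` this is the Tikhonov-regularized solution `x̂_α`. -/
noncomputable def dirSol (A : E →L[ℝ] X) (RinvL : X →L[ℝ] Y) (x0 : X) (z : Y) (α : ℝ) : X :=
  x0 + A ((Ring.inverse ((ContinuousLinearMap.adjoint (RinvL ∘L A)) ∘L (RinvL ∘L A) + α • 1))
    ((ContinuousLinearMap.adjoint (RinvL ∘L A)) z))

/-- The metric projection onto the closed ball of radius `r` around `x0`. -/
noncomputable def projBall (x0 : X) (r : ℝ) (x : X) : X :=
  if ‖x - x0‖ ≤ r then x else x0 + (r / ‖x - x0‖) • (x - x0)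

/-- The discrepancy-principle stopping index `min {k ≥ 1 : ‖ŷ - L (sol k)‖_R ≤ c}`,
where `‖v‖_R = ‖w‖` for the unique `w` with `R^{1/2} w = v`. -/
noncomputable def stopIdx (sqrtR : Y →L[ℝ] Y) (L : X →L[ℝ] Y) (sol : ℕ → X) (yhat : Y)
    (c : ℝ) : ℕ :=
  sInf {k : ℕ | 1 ≤ k ∧ ∃ w : Y, sqrtR w = yhat - L (sol k) ∧ ‖w‖ ≤ c}

/-- `α_k = b^k α₀`. -/
noncomputable def alphaSeq (b α0 : ℝ) (k : ℕ) : ℝ := b ^ k * α0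

/-- `J_k = ⌈b^{-k/γ} J₀⌉`. -/
noncomputable def jSeq (b γ : ℝ) (J0 : ℕ) (k : ℕ) : ℕ := ⌈b ^ (-(k : ℝ) / γ) * (J0 : ℝ)⌉₊

end Defs

set_option maxHeartbeats 1000000
set_option linter.unusedSectionVars false
set_option linter.unusedVariables false

section AuxEKI
open scoped InnerProductSpace
variable {X : Type*} [NormedAddCommGroup X] [InnerProductSpace ℝ X] [CompleteSpace X]

section Units


lemma lowbound {S : X →L[ℝ] X} (hS : ∀ y, 0 ≤ ⟪S y, y⟫_ℝ) {α : ℝ} (hα : 0 < α) (y : X) :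
    α * ‖y‖ ≤ ‖(S + α • 1) y‖ := by
  have h2 : α * ‖y‖ ^ 2 ≤ ⟪(S + α • 1) y, y⟫_ℝ := by
    simp only [ContinuousLinearMap.add_apply, ContinuousLinearMap.smul_apply,
      ContinuousLinearMap.one_apply, inner_add_left, real_inner_smul_left,
      real_inner_self_eq_norm_sq]
    nlinarith [hS y]
  have h3 : ⟪(S + α • 1) y, y⟫_ℝ ≤ ‖(S + α • 1) y‖ * ‖y‖ := real_inner_le_norm _ _
  rcases eq_or_ne y 0 with rfl | hy
  · simp
  · have hny : 0 < ‖y‖ := norm_pos_iff.mpr hy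
    nlinarith

lemma isUnit_shift {S : X →L[ℝ] X} (hSa : IsSelfAdjoint S) (hS : ∀ y, 0 ≤ ⟪S y, y⟫_ℝ)
    {α : ℝ} (hα : 0 < α) : IsUnit (S + α • 1) := by
  set T := S + α • 1 with hT
  have hlow : ∀ y, α * ‖y‖ ≤ ‖T y‖ := lowbound hS hα
  have hker : LinearMap.ker (T : X →ₗ[ℝ] X) = ⊥ := by
    rw [LinearMap.ker_eq_bot']
    intro y hy
    have h := hlow y
    rw [show T y = 0 from hy] at h
    simp only [norm_zero] at h
    have : ‖y‖ ≤ 0 := by nlinarith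
    simpa using le_antisymm this (norm_nonneg y)
  have hanti : AntilipschitzWith (⟨α, hα.le⟩ : NNReal)⁻¹ T := by
    apply ContinuousLinearMap.antilipschitz_of_bound
    intro x
    change ‖x‖ ≤ α⁻¹ * ‖T x‖
    rw [inv_mul_eq_div, le_div_iff₀ hα]
    linarith [hlow x]
  have hclosed : IsClosed (Set.range T) := hanti.isClosed_range T.uniformContinuous
  have hclosed' : IsClosed ((LinearMap.range (T : X →ₗ[ℝ] X) : Submodule ℝ X) : Set X) := by
    rw [LinearMap.coe_range]; exact hclosed
  haveI : CompleteSpace (LinearMap.range (T : X →ₗ[ℝ] X) : Submodule ℝ X) := hclosed'.completeSpace_coe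
  have hrange : LinearMap.range (T : X →ₗ[ℝ] X) = ⊤ := by
    rw [← Submodule.orthogonal_eq_bot_iff]
    rw [Submodule.eq_bot_iff]
    intro y hy
    have h0 : ⟪T y, y⟫_ℝ = 0 := by
      simpa [real_inner_comm] using hy (T y) (LinearMap.mem_range_self _ y)
    have h2 : α * ‖y‖ ^ 2 ≤ 0 := by
      rw [← h0, hT]
      simp only [ContinuousLinearMap.add_apply, inner_add_left,
        ContinuousLinearMap.smul_apply, ContinuousLinearMap.one_apply,
        real_inner_smul_left, real_inner_self_eq_norm_sq]
      nlinarith [hS y]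
    by_contra hy0
    have hny : 0 < ‖y‖ := norm_pos_iff.mpr hy0
    nlinarith [mul_pos hα (pow_pos hny 2)]
  let e := ContinuousLinearEquiv.ofBijective T hker hrange
  have hcoe : (↑e : X →L[ℝ] X) = T := ContinuousLinearEquiv.coe_ofBijective T hker hrange
  have he : ∀ z, e z = T z := fun z => by rw [← hcoe]; rfl
  refine ⟨⟨T, e.symm.toContinuousLinearMap, ?_, ?_⟩, rfl⟩
  · ext x
    simp only [ContinuousLinearMap.mul_apply, ContinuousLinearMap.one_apply,
      ContinuousLinearEquiv.coe_coe]
    rw [← he (e.symm x), e.apply_symm_apply]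
  · ext x
    simp only [ContinuousLinearMap.mul_apply, ContinuousLinearMap.one_apply,
      ContinuousLinearEquiv.coe_coe]
    rw [← he x, e.symm_apply_apply]

end Units

section Moment
variable (fpow : ℝ → (X →L[ℝ] X))
  (hadd : ∀ s t : ℝ, 0 < s → 0 < t → fpow (s + t) = fpow s ∘L fpow t)
  (hsa : ∀ t : ℝ, 0 < t → ContinuousLinearMap.adjoint (fpow t) = fpow t)

include hadd hsa

lemma sq_norm_fpow (x : X) {t : ℝ} (ht : 0 < t) :
    ‖fpow t x‖ ^ 2 = ⟪fpow (t + t) x, x⟫_ℝ := by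
  have h : ⟪fpow (t + t) x, x⟫_ℝ = ⟪fpow t x, fpow t x⟫_ℝ := by
    rw [hadd t t ht ht, ContinuousLinearMap.comp_apply]
    calc ⟪(fpow t) ((fpow t) x), x⟫_ℝ
        = ⟪(ContinuousLinearMap.adjoint (fpow t)) ((fpow t) x), x⟫_ℝ := by rw [hsa t ht]
      _ = ⟪(fpow t) x, (fpow t) x⟫_ℝ := ContinuousLinearMap.adjoint_inner_left _ _ _
  rw [h, real_inner_self_eq_norm_sq]

lemma midpoint_ineq (x : X) {s t : ℝ} (hs : 0 < s) (ht : 0 < t) :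
    ‖fpow ((s + t) / 2) x‖ ^ 2 ≤ ‖fpow s x‖ * ‖fpow t x‖ := by
  have hm : 0 < (s + t) / 2 := by linarith
  have h1 : ‖fpow ((s + t) / 2) x‖ ^ 2 = ⟪fpow (s + t) x, x⟫_ℝ := by
    have := sq_norm_fpow fpow hadd hsa x hm
    rwa [show (s + t) / 2 + (s + t) / 2 = s + t by ring] at this
  rw [h1, hadd s t hs ht, ContinuousLinearMap.comp_apply]
  calc ⟪(fpow s) ((fpow t) x), x⟫_ℝ
      = ⟪(ContinuousLinearMap.adjoint (fpow s)) ((fpow t) x), x⟫_ℝ := by rw [hsa s hs]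
    _ = ⟪(fpow t) x, (fpow s) x⟫_ℝ := ContinuousLinearMap.adjoint_inner_left _ _ _
    _ ≤ ‖fpow t x‖ * ‖fpow s x‖ := real_inner_le_norm _ _
    _ = ‖fpow s x‖ * ‖fpow t x‖ := mul_comm _ _

lemma edge_ineq (x : X) {t : ℝ} (ht : 0 < t) :
    ‖fpow t x‖ ^ 2 ≤ ‖fpow (t + t) x‖ * ‖x‖ := by
  rw [sq_norm_fpow fpow hadd hsa x ht]
  exact real_inner_le_norm _ _

lemma fpow_zero_prop (x : X) (h1 : fpow 1 x = 0) : ∀ t : ℝ, 0 < t → fpow t x = 0 := by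
  have hU : ∀ t : ℝ, 1 ≤ t → fpow t x = 0 := by
    intro t ht
    rcases eq_or_lt_of_le ht with h | h
    · rw [← h]; exact h1
    · rw [show t = (t - 1) + 1 by ring, hadd _ _ (by linarith) one_pos,
        ContinuousLinearMap.comp_apply, h1, _root_.map_zero]
  have claim : ∀ n : ℕ, ∀ t : ℝ, 0 < t → ((2:ℝ) ^ n)⁻¹ ≤ t → fpow t x = 0 := by
    intro n
    induction n with
    | zero => intro t ht hle; exact hU t (by simpa using hle)
    | succ n ih =>
      intro t ht hle
      by_cases h : ((2:ℝ) ^ n)⁻¹ ≤ t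
      · exact ih t ht h
      · have h2t : ((2:ℝ) ^ n)⁻¹ ≤ t + t := by
          rw [pow_succ] at hle
          have : ((2:ℝ) ^ n)⁻¹ = 2 * ((2:ℝ) ^ n * 2)⁻¹ := by
            field_simp
          linarith [hle]
        have hz : fpow (t + t) x = 0 := ih (t + t) (by linarith) h2t
        have hsq : ‖fpow t x‖ ^ 2 = 0 := by
          rw [sq_norm_fpow fpow hadd hsa x ht, hz, inner_zero_left]
        have : ‖fpow t x‖ = 0 := by
          nlinarith [norm_nonneg (fpow t x)]
        simpa using this
  intro t ht
  obtain ⟨n, hn⟩ := pow_unbounded_of_one_lt t⁻¹ (one_lt_two (α := ℝ))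
  exact claim n t ht (le_of_lt (inv_lt_of_inv_lt₀ ht hn))
end Moment

lemma rpow_sq' {a : ℝ} (ha : 0 < a) (p : ℝ) : a ^ (2 * p) = (a ^ p) ^ 2 := by
  rw [mul_comm, Real.rpow_mul ha.le, Real.rpow_two]

lemma le_of_sq_le_sq' {f c : ℝ} (hf : 0 ≤ f) (hc : 0 ≤ c) (h : f ^ 2 ≤ c ^ 2) : f ≤ c := by
  nlinarith

section Moment2
variable (fpow : ℝ → (X →L[ℝ] X))
  (hadd : ∀ s t : ℝ, 0 < s → 0 < t → fpow (s + t) = fpow s ∘L fpow t)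
  (hsa : ∀ t : ℝ, 0 < t → ContinuousLinearMap.adjoint (fpow t) = fpow t)

include hadd hsa

lemma dyadic_bound (x : X) {a b : ℝ} (ha : 0 < a) (hb : 0 < b)
    (hfa : ‖fpow 1 x‖ ≤ a) (hfb : ‖x‖ ≤ b) :
    ∀ n k : ℕ, 1 ≤ k → k ≤ 2 ^ n →
      ‖fpow ((k : ℝ) / 2 ^ n) x‖ ≤ a ^ ((k : ℝ) / 2 ^ n) * b ^ (1 - (k : ℝ) / 2 ^ n) := by
  intro n
  induction n with
  | zero =>
    intro k hk1 hk2
    have hk : k = 1 := le_antisymm (by simpa using hk2) hk1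
    subst hk
    have he : ((1:ℕ) : ℝ) / 2 ^ 0 = 1 := by norm_num
    rw [he, Real.rpow_one]
    simpa using hfa
  | succ n ih =>
    intro k hk1 hk2
    have h2pow : (2:ℕ) ^ (n+1) = 2 ^ n + 2 ^ n := by rw [pow_succ]; ring
    have h2Rpos : (0:ℝ) < 2 ^ n := by positivity
    have h2R1pos : (0:ℝ) < 2 ^ (n+1) := by positivity
    rcases Nat.even_or_odd k with ⟨j, hj⟩ | ⟨j, hj⟩
    · -- even : k = j + j
      have hj1 : 1 ≤ j := by omega
      have hj2 : j ≤ 2 ^ n := by omega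
      have hexp : ((k : ℝ)) / 2 ^ (n+1) = (j : ℝ) / 2 ^ n := by
        subst hj; push_cast; rw [pow_succ]; field_simp; ring
      rw [hexp]
      exact ih j hj1 hj2
    · -- odd : k = 2*j + 1
      set e : ℝ := (k : ℝ) / 2 ^ (n+1) with hedef
      have hepos : 0 < e := by
        apply div_pos _ h2R1pos
        exact_mod_cast Nat.pos_of_ne_zero (by omega)
      rcases Nat.eq_zero_or_pos j with hj0 | hjpos
      · -- k = 1
        have hk : k = 1 := by omega
        have htt : e + e = ((1:ℕ) : ℝ) / 2 ^ n := by
          rw [hedef, hk]; push_cast; rw [pow_succ]; field_simp; ring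
        have h1 : ‖fpow e x‖ ^ 2 ≤ ‖fpow (e + e) x‖ * ‖x‖ :=
          edge_ineq fpow hadd hsa x hepos
        rw [htt] at h1
        have h2 := ih 1 le_rfl Nat.one_le_two_pow
        have h3 : ‖fpow e x‖ ^ 2 ≤
            a ^ (((1:ℕ):ℝ) / 2 ^ n) * b ^ (1 - ((1:ℕ):ℝ) / 2 ^ n) * b := by
          calc ‖fpow e x‖ ^ 2 ≤ ‖fpow (((1:ℕ):ℝ) / 2 ^ n) x‖ * ‖x‖ := h1
            _ ≤ a ^ (((1:ℕ):ℝ) / 2 ^ n) * b ^ (1 - ((1:ℕ):ℝ) / 2 ^ n) * b := by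
                apply mul_le_mul h2 hfb (norm_nonneg _) (by positivity)
        have heq : (a ^ e * b ^ (1 - e)) ^ 2 =
            a ^ (((1:ℕ):ℝ) / 2 ^ n) * b ^ (1 - ((1:ℕ):ℝ) / 2 ^ n) * b := by
          rw [mul_pow, ← rpow_sq' ha, ← rpow_sq' hb]
          rw [show (2 : ℝ) * e = ((1:ℕ):ℝ) / 2 ^ n by rw [← htt]; ring]
          rw [show (2 : ℝ) * (1 - e) = (1 - ((1:ℕ):ℝ) / 2 ^ n) + 1 by
            rw [two_mul]; rw [← htt]; ring]
          rw [Real.rpow_add hb, Real.rpow_one]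
          ring
        exact le_of_sq_le_sq' (norm_nonneg _) (by positivity) (by rw [heq]; exact h3)
      · -- j ≥ 1
        have hj2 : j + 1 ≤ 2 ^ n := by omega
        set s : ℝ := (j : ℝ) / 2 ^ n with hsdef
        set t : ℝ := ((j:ℕ) + 1 : ℝ) / 2 ^ n with htdef
        have hspos : 0 < s := by
          apply div_pos _ h2Rpos
          exact_mod_cast hjpos
        have htpos : 0 < t := by positivity
        have hmid : (s + t) / 2 = e := by
          rw [hsdef, htdef, hedef, hj]; push_cast; rw [pow_succ]; field_simp; ring
        have h1 : ‖fpow e x‖ ^ 2 ≤ ‖fpow s x‖ * ‖fpow t x‖ := by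
          rw [← hmid]
          exact midpoint_ineq fpow hadd hsa x hspos htpos
        have ihs := ih j hjpos (by omega)
        have iht := ih (j+1) (by omega) hj2
        rw [← hsdef] at ihs
        have iht' : ‖fpow t x‖ ≤ a ^ t * b ^ (1 - t) := by
          have hcast : ((j+1 : ℕ) : ℝ) / 2 ^ n = t := by rw [htdef]; push_cast; ring
          rwa [hcast] at iht
        have h3 : ‖fpow e x‖ ^ 2 ≤ (a ^ s * b ^ (1 - s)) * (a ^ t * b ^ (1 - t)) := by
          calc ‖fpow e x‖ ^ 2 ≤ ‖fpow s x‖ * ‖fpow t x‖ := h1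
            _ ≤ (a ^ s * b ^ (1 - s)) * (a ^ t * b ^ (1 - t)) :=
                mul_le_mul ihs iht' (norm_nonneg _) (by positivity)
        have heq : (a ^ e * b ^ (1 - e)) ^ 2 =
            (a ^ s * b ^ (1 - s)) * (a ^ t * b ^ (1 - t)) := by
          rw [mul_pow, ← rpow_sq' ha, ← rpow_sq' hb]
          rw [show (2 : ℝ) * e = s + t by rw [← hmid]; ring]
          rw [show (2 : ℝ) * (1 - e) = (1 - s) + (1 - t) by rw [show e = (s+t)/2 from hmid.symm]; ring]
          rw [Real.rpow_add ha, Real.rpow_add hb]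
          ring
        exact le_of_sq_le_sq' (norm_nonneg _) (by positivity) (by rw [heq]; exact h3)

lemma moment_ineq (hcont : ContinuousOn fpow (Set.Ioi (0:ℝ))) (x : X)
    {ν : ℝ} (hν : 0 < ν) (hν1 : ν ≤ 1) :
    ‖fpow ν x‖ ≤ ‖fpow 1 x‖ ^ ν * ‖x‖ ^ (1 - ν) := by
  by_cases hx : x = 0
  · subst hx; simp only [_root_.map_zero, norm_zero]; positivity
  by_cases h1 : fpow 1 x = 0
  · rw [fpow_zero_prop fpow hadd hsa x h1 ν hν, norm_zero]; positivity
  set a := ‖fpow 1 x‖ with hadef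
  set b := ‖x‖ with hbdef
  have ha : 0 < a := norm_pos_iff.mpr h1
  have hb : 0 < b := norm_pos_iff.mpr hx
  set K : ℕ → ℕ := fun n => ⌈ν * 2 ^ n⌉₊ with hK
  set w : ℕ → ℝ := fun n => (K n : ℝ) / 2 ^ n with hw
  have h2n : ∀ n : ℕ, (0:ℝ) < 2 ^ n := fun n => by positivity
  have hK1 : ∀ n, 1 ≤ K n := fun n => Nat.one_le_ceil_iff.mpr (by positivity)
  have hK2 : ∀ n, K n ≤ 2 ^ n := fun n => Nat.ceil_le.mpr (by
    push_cast
    nlinarith [h2n n])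
  have hb1 : ∀ n, ‖fpow (w n) x‖ ≤ a ^ (w n) * b ^ (1 - w n) :=
    fun n => dyadic_bound fpow hadd hsa x ha hb le_rfl le_rfl n (K n) (hK1 n) (hK2 n)
  have hge : ∀ n, ν ≤ w n := fun n => by
    rw [hw]; simp only []
    rw [le_div_iff₀ (h2n n)]; exact Nat.le_ceil _
  have hlt : ∀ n, w n ≤ ν + ((2:ℝ)⁻¹) ^ n := fun n => by
    rw [hw]; simp only []
    rw [div_le_iff₀ (h2n n)]
    have hc := Nat.ceil_lt_add_one (show (0:ℝ) ≤ ν * 2 ^ n by positivity)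
    have h2 : ((2:ℝ)⁻¹) ^ n * 2 ^ n = 1 := by
      rw [← mul_pow]; norm_num
    nlinarith [h2n n]
  have htends : Filter.Tendsto w Filter.atTop (nhds ν) := by
    have hupper : Filter.Tendsto (fun n : ℕ => ν + ((2:ℝ)⁻¹) ^ n) Filter.atTop (nhds ν) := by
      have h0 := tendsto_pow_atTop_nhds_zero_of_lt_one
        (by norm_num : (0:ℝ) ≤ 2⁻¹) (by norm_num : (2:ℝ)⁻¹ < 1)
      simpa using Filter.Tendsto.const_add ν h0
    exact tendsto_of_tendsto_of_tendsto_of_le_of_le tendsto_const_nhds hupper hge hlt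
  have hfc : ContinuousAt fpow ν := hcont.continuousAt (Ioi_mem_nhds hν)
  have heval : Continuous (fun T : X →L[ℝ] X => ‖T x‖) :=
    (ContinuousLinearMap.apply ℝ X x).continuous.norm
  have hL : Filter.Tendsto (fun n => ‖fpow (w n) x‖) Filter.atTop (nhds ‖fpow ν x‖) :=
    (heval.tendsto _).comp (hfc.tendsto.comp htends)
  have hR : Filter.Tendsto (fun n => a ^ (w n) * b ^ (1 - w n)) Filter.atTop
      (nhds (a ^ ν * b ^ (1 - ν))) := by
    have hca : Continuous (fun t : ℝ => a ^ t) := by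
      have h : (fun t : ℝ => a ^ t) = fun t => Real.exp (Real.log a * t) := by
        funext t; rw [Real.rpow_def_of_pos ha]
      rw [h]; exact Real.continuous_exp.comp (continuous_const.mul continuous_id)
    have hcb : Continuous (fun t : ℝ => b ^ (1 - t)) := by
      have h : (fun t : ℝ => b ^ (1-t)) = fun t => Real.exp (Real.log b * (1-t)) := by
        funext t; rw [Real.rpow_def_of_pos hb]
      rw [h]
      exact Real.continuous_exp.comp (continuous_const.mul (continuous_const.sub continuous_id))
    exact ((hca.mul hcb).tendsto ν).comp htends
  exact le_of_tendsto_of_tendsto' hL hR hb1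

end Moment2


theorem stmt11_core
    {X Y : Type*}
    [NormedAddCommGroup X] [InnerProductSpace ℝ X] [CompleteSpace X]
    [NormedAddCommGroup Y] [InnerProductSpace ℝ Y] [CompleteSpace Y]
    (L : X →L[ℝ] Y)
    (sqrtC0 : X →L[ℝ] X)
    (sqrtR : Y →L[ℝ] Y)
    (RinvL : X →L[ℝ] Y) (hRinvL : sqrtR ∘L RinvL = L)
    (x0 : X)
    (μ : ℝ) (hμ : 0 < μ) (hμhalf : μ ≤ 1 / 2)
    (fpow : ℝ → (X →L[ℝ] X))
    (hfpow1 : fpow 1 = (ContinuousLinearMap.adjoint (RinvL ∘L sqrtC0)) ∘L (RinvL ∘L sqrtC0))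
    (hfpowadd : ∀ s t : ℝ, 0 < s → 0 < t → fpow (s + t) = fpow s ∘L fpow t)
    (hfpowpos : ∀ t : ℝ, 0 < t → (fpow t).IsPositive)
    (hfpowcont : ContinuousOn fpow (Set.Ioi (0 : ℝ))) :
    ∃ c2 : ℝ, 0 < c2 ∧
      ∀ (xdag : X) (ρ : ℝ) (v : X), 0 < ρ → ‖v‖ ≤ ρ →
        xdag - x0 = sqrtC0 (fpow μ v) →
        (∃ wdag : X, sqrtC0 wdag = xdag - x0 ∧
          ∀ w : X, L (x0 + sqrtC0 w) = L xdag → ‖wdag‖ ≤ ‖w‖) →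
        ∀ α : ℝ, 0 < α →
          ∃ wY : Y,
            sqrtR wY = L xdag - L (dirSol sqrtC0 RinvL x0 (RinvL (xdag - x0)) α) ∧
            ‖wY‖ ≤ c2 * ρ * α ^ (μ + 1 / 2) := by
  classical
  set B : X →L[ℝ] Y := RinvL ∘L sqrtC0 with hB
  have hsa : ∀ t : ℝ, 0 < t → ContinuousLinearMap.adjoint (fpow t) = fpow t :=
    fun t ht => ContinuousLinearMap.isSelfAdjoint_iff'.mp (hfpowpos t ht).isSelfAdjoint
  have hS1 : ∀ y : X, ⟪(fpow 1) y, y⟫_ℝ = ⟪B y, B y⟫_ℝ := by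
    intro y
    rw [hfpow1, ContinuousLinearMap.comp_apply, ContinuousLinearMap.adjoint_inner_left]
  have hSnn : ∀ y : X, 0 ≤ ⟪(fpow 1) y, y⟫_ℝ := fun y => by
    rw [hS1]; exact real_inner_self_nonneg
  have hBnorm : ∀ w : X, ‖B w‖ = ‖fpow (1/2 : ℝ) w‖ := by
    intro w
    have h1 : ‖fpow (1/2 : ℝ) w‖ ^ 2 = ⟪(fpow 1) w, w⟫_ℝ := by
      have := sq_norm_fpow fpow hfpowadd hsa w (by norm_num : (0:ℝ) < 1/2)
      rwa [show (1:ℝ)/2 + 1/2 = 1 by norm_num] at this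
    have h2 : ‖B w‖ ^ 2 = ⟪(fpow 1) w, w⟫_ℝ := by
      rw [hS1, real_inner_self_eq_norm_sq]
    have h3 : ‖B w‖ ^ 2 = ‖fpow (1/2 : ℝ) w‖ ^ 2 := by rw [h1, h2]
    exact le_antisymm
      (le_of_sq_le_sq' (norm_nonneg _) (norm_nonneg _) h3.le)
      (le_of_sq_le_sq' (norm_nonneg _) (norm_nonneg _) h3.ge)
  refine ⟨1, one_pos, ?_⟩
  intro xdag ρ v hρ hvρ hsrc _hmin α hα
  set ν : ℝ := μ + 1/2 with hν
  have hν0 : 0 < ν := by rw [hν]; linarith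
  have hν1 : ν ≤ 1 := by rw [hν]; linarith
  set T : X →L[ℝ] X := fpow 1 + α • 1 with hT
  have hunit : IsUnit T := isUnit_shift (hfpowpos 1 one_pos).isSelfAdjoint hSnn hα
  set G : X →L[ℝ] X := Ring.inverse T with hG
  have hGT : G * T = 1 := Ring.inverse_mul_cancel T hunit
  have hTG : T * G = 1 := Ring.mul_inverse_cancel T hunit
  -- commutation
  have hcommT : fpow μ * T = T * fpow μ := by
    have h1 : fpow μ * fpow 1 = fpow 1 * fpow μ := by
      have e1 := hfpowadd μ 1 hμ one_pos
      have e2 := hfpowadd 1 μ one_pos hμ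
      rw [show μ + 1 = 1 + μ by ring] at e1
      calc fpow μ * fpow 1 = fpow μ ∘L fpow 1 := rfl
        _ = fpow (1 + μ) := e1.symm
        _ = fpow 1 ∘L fpow μ := e2
        _ = fpow 1 * fpow μ := rfl
    rw [hT]
    rw [mul_add, add_mul, h1]
    congr 1
    ext z
    simp [ContinuousLinearMap.mul_apply]
  have hcommG : G * fpow μ = fpow μ * G := by
    have e1 : G * (fpow μ * T) * G = G * fpow μ := by
      rw [← mul_assoc, mul_assoc (G * fpow μ) T G, hTG, mul_one]
    have e2 : G * (T * fpow μ) * G = fpow μ * G := by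
      rw [← mul_assoc, mul_assoc G T (fpow μ), ← mul_assoc G T (fpow μ)]
      rw [hGT, one_mul]
    rw [← e1, hcommT, e2]
  set u : X := fpow μ v with hu
  set q : X := G ((ContinuousLinearMap.adjoint B) (RinvL (xdag - x0))) with hq
  have hzu : RinvL (xdag - x0) = B u := by
    rw [hsrc, hB]; rfl
  have hqq : q = G ((fpow 1) u) := by
    rw [hq, hzu, hfpow1]; rfl
  have huq : u - q = α • G u := by
    have h1 : G (T u) = u := by
      have := congrArg (fun (A : X →L[ℝ] X) => A u) hGT
      simpa [ContinuousLinearMap.mul_apply] using this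
    have h2 : T u = (fpow 1) u + α • u := by
      rw [hT]; simp [ContinuousLinearMap.add_apply]
    rw [hqq]
    calc u - G ((fpow 1) u) = G (T u) - G ((fpow 1) u) := by rw [h1]
      _ = G ((fpow 1) u + α • u) - G ((fpow 1) u) := by rw [h2]
      _ = α • G u := by rw [_root_.map_add, _root_.map_smul]; abel
  refine ⟨B u - B q, ?_, ?_⟩
  · -- first component
    have hL : ∀ w : X, L w = sqrtR (RinvL w) := fun w => by
      rw [← hRinvL]; rfl
    have hdir : dirSol sqrtC0 RinvL x0 (RinvL (xdag - x0)) α = x0 + sqrtC0 q := by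
      rw [dirSol, hq, hG, hT, hfpow1, hB]
    have hBapp : ∀ w : X, B w = RinvL (sqrtC0 w) := fun w => by rw [hB]; rfl
    rw [hdir, hL xdag, hL (x0 + sqrtC0 q), _root_.map_sub, hBapp, hBapp, ← hsrc]
    simp only [_root_.map_sub, _root_.map_add]
    abel
  · -- norm bound
    have hBuq : B u - B q = α • B (G u) := by
      rw [← _root_.map_sub, huq, _root_.map_smul]
    rw [hBuq, norm_smul, Real.norm_eq_abs, abs_of_pos hα]
    have hGu : G u = fpow μ (G v) := by
      have := congrArg (fun (A : X →L[ℝ] X) => A v) hcommG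
      simpa [ContinuousLinearMap.mul_apply, hu] using this
    have hBn : ‖B (G u)‖ = ‖fpow ν (G v)‖ := by
      rw [hBnorm, hGu]
      have e := hfpowadd (1/2) μ (by norm_num) hμ
      have : fpow (1/2 : ℝ) (fpow μ (G v)) = fpow ((1:ℝ)/2 + μ) (G v) := by
        rw [e]; rfl
      rw [this, show (1:ℝ)/2 + μ = ν by rw [hν]; ring]
    rw [hBn]
    -- bounds on G v
    set yv : X := G v with hyv
    have hTyv : T yv = v := by
      have := congrArg (fun (A : X →L[ℝ] X) => A v) hTG
      simpa [ContinuousLinearMap.mul_apply] using this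
    have hexpand : ‖v‖ ^ 2 =
        ‖(fpow 1) yv‖ ^ 2 + 2 * α * ⟪(fpow 1) yv, yv⟫_ℝ + α ^ 2 * ‖yv‖ ^ 2 := by
      rw [← hTyv, hT]
      simp only [ContinuousLinearMap.add_apply, ContinuousLinearMap.smul_apply,
        ContinuousLinearMap.one_apply]
      rw [← real_inner_self_eq_norm_sq, inner_add_add_self]
      simp only [real_inner_smul_left, real_inner_smul_right, real_inner_self_eq_norm_sq]
      rw [real_inner_comm yv ((fpow 1) yv), norm_smul, Real.norm_eq_abs, abs_of_pos hα]
      ring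
    have hcross : 0 ≤ ⟪(fpow 1) yv, yv⟫_ℝ := hSnn yv
    have hA : ‖(fpow 1) yv‖ ≤ ‖v‖ := by
      apply le_of_sq_le_sq' (norm_nonneg _) (norm_nonneg _)
      nlinarith [sq_nonneg ‖yv‖]
    have hBv : ‖yv‖ ≤ α⁻¹ * ‖v‖ := by
      have h1 : (α * ‖yv‖) ^ 2 ≤ ‖v‖ ^ 2 := by
        nlinarith [sq_nonneg ‖(fpow 1) yv‖, mul_nonneg hα.le hcross]
      have h2 : α * ‖yv‖ ≤ ‖v‖ :=
        le_of_sq_le_sq' (by positivity) (norm_nonneg _) h1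
      calc ‖yv‖ = α⁻¹ * (α * ‖yv‖) := by field_simp
        _ ≤ α⁻¹ * ‖v‖ := mul_le_mul_of_nonneg_left h2 (by positivity)
    have hmom := moment_ineq fpow hfpowadd hsa hfpowcont yv hν0 hν1
    have hmono : ‖(fpow 1) yv‖ ^ ν * ‖yv‖ ^ (1 - ν) ≤ ‖v‖ ^ ν * (α⁻¹ * ‖v‖) ^ (1 - ν) := by
      apply mul_le_mul
      · exact Real.rpow_le_rpow (norm_nonneg _) hA hν0.le
      · exact Real.rpow_le_rpow (norm_nonneg _) hBv (by linarith)
      · exact Real.rpow_nonneg (norm_nonneg _) _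
      · exact Real.rpow_nonneg (norm_nonneg _) _
    have hfinal : α * (‖v‖ ^ ν * (α⁻¹ * ‖v‖) ^ (1 - ν)) ≤ 1 * ρ * α ^ ν := by
      rw [Real.mul_rpow (by positivity) (norm_nonneg _)]
      have hv1 : ‖v‖ ^ ν * ‖v‖ ^ (1 - ν) = ‖v‖ := by
        rw [← Real.rpow_add' (norm_nonneg _) (by norm_num : ν + (1 - ν) ≠ 0)]
        norm_num
      have hαpow : α * (α⁻¹) ^ (1 - ν) = α ^ ν := by
        have h1 : (α⁻¹ : ℝ) ^ (1 - ν) = α ^ (-(1 - ν)) := by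
          rw [Real.inv_rpow hα.le, ← Real.rpow_neg hα.le]
        have h2 : α * α ^ (-(1 - ν)) = α ^ (1 + -(1 - ν)) := by
          rw [Real.rpow_add hα, Real.rpow_one]
        rw [h1, h2, show 1 + -(1 - ν) = ν by ring]
      calc α * (‖v‖ ^ ν * ((α⁻¹) ^ (1 - ν) * ‖v‖ ^ (1 - ν)))
          = (α * (α⁻¹) ^ (1 - ν)) * (‖v‖ ^ ν * ‖v‖ ^ (1 - ν)) := by ring
        _ = α ^ ν * ‖v‖ := by rw [hαpow, hv1]
        _ ≤ α ^ ν * ρ := by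
            apply mul_le_mul_of_nonneg_left hvρ (Real.rpow_nonneg hα.le _)
        _ = 1 * ρ * α ^ ν := by ring
    calc α * ‖fpow ν yv‖ ≤ α * (‖(fpow 1) yv‖ ^ ν * ‖yv‖ ^ (1 - ν)) := by
          exact mul_le_mul_of_nonneg_left hmom hα.le
      _ ≤ α * (‖v‖ ^ ν * (α⁻¹ * ‖v‖) ^ (1 - ν)) := mul_le_mul_of_nonneg_left hmono hα.le
      _ ≤ 1 * ρ * α ^ ν := hfinal

end AuxEKI


/-- STATEMENT 11: under the source condition, the exact-data residual satisfies
`‖y - L x_α‖_R ≤ c₂ ρ α^{μ+1/2}` with `c₂` independent of `α`, `δ` and `ρ`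
(the source-condition data `x†, ρ, v` and the minimum-norm property are quantified after `c₂`).
Here `x_α = dirSol sqrtC0 RinvL x0 (RinvL (xdag - x0)) α` and `y = L x†`. -/
theorem stmt11
    {X Y : Type*}
    [NormedAddCommGroup X] [InnerProductSpace ℝ X] [CompleteSpace X]
    [TopologicalSpace.SeparableSpace X]
    [NormedAddCommGroup Y] [InnerProductSpace ℝ Y] [CompleteSpace Y]
    [TopologicalSpace.SeparableSpace Y]
    (L : X →L[ℝ] Y)
    (C0 : X →L[ℝ] X) (hC0pos : C0.IsPositive) (hC0inj : Function.Injective C0)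
    (hC0cpt : IsCompactOperator (⇑C0))
    (R : Y →L[ℝ] Y) (hRpos : R.IsPositive) (hRinj : Function.Injective R)
    -- `sqrtC0 = C0^{1/2}` and `sqrtR = R^{1/2}`
    (sqrtC0 : X →L[ℝ] X) (hsqrtC0pos : sqrtC0.IsPositive) (hsqrtC0 : sqrtC0 ∘L sqrtC0 = C0)
    (sqrtR : Y →L[ℝ] Y) (hsqrtRpos : sqrtR.IsPositive) (hsqrtR : sqrtR ∘L sqrtR = R)
    -- `RinvL = R^{-1/2} L` is bounded with `‖R^{-1/2} L‖ ≤ c_RL`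
    (RinvL : X →L[ℝ] Y) (hRinvL : sqrtR ∘L RinvL = L)
    (cRL : ℝ) (hcRL : ‖RinvL‖ ≤ cRL)
    (x0 : X)
    (μ : ℝ) (hμ : 0 < μ) (hμhalf : μ ≤ 1 / 2)
    -- `fpow t = (B*B)^t` for `t > 0`, where `B = R^{-1/2} L C0^{1/2} = RinvL ∘L sqrtC0`
    (fpow : ℝ → (X →L[ℝ] X))
    (hfpow1 : fpow 1 = (ContinuousLinearMap.adjoint (RinvL ∘L sqrtC0)) ∘L (RinvL ∘L sqrtC0))
    (hfpowadd : ∀ s t : ℝ, 0 < s → 0 < t → fpow (s + t) = fpow s ∘L fpow t)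
    (hfpowpos : ∀ t : ℝ, 0 < t → (fpow t).IsPositive)
    (hfpowcont : ContinuousOn fpow (Set.Ioi (0 : ℝ))) :
    ∃ c2 : ℝ, 0 < c2 ∧
      ∀ (xdag : X) (ρ : ℝ) (v : X), 0 < ρ → ‖v‖ ≤ ρ →
        -- source condition
        xdag - x0 = sqrtC0 (fpow μ v) →
        -- `x†` is the `(x₀, C0)`-minimum-norm solution of `L x = L x†`
        (∃ wdag : X, sqrtC0 wdag = xdag - x0 ∧
          ∀ w : X, L (x0 + sqrtC0 w) = L xdag → ‖wdag‖ ≤ ‖w‖) →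
        ∀ α : ℝ, 0 < α →
          ∃ wY : Y,
            sqrtR wY = L xdag - L (dirSol sqrtC0 RinvL x0 (RinvL (xdag - x0)) α) ∧
            ‖wY‖ ≤ c2 * ρ * α ^ (μ + 1 / 2) := by
  exact stmt11_core L sqrtC0 sqrtR RinvL hRinvL x0 μ hμ hμhalf fpow hfpow1 hfpowadd hfpowpos
    hfpowcont
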